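/- For any integer n ≥ 2 and any half-open interval I = [a,b) with a < b there exist step functions f_1,…,f_n on I taking only the values +1 and −1 such that ∏_{k=1}^n f_k(x) = 1 for all x ∈ I, and ∫_I ∏_{k∈U} f_k(x) dx = 0 for every nonempty proper subset U of {1,…,n}. -/

import Mathlib

open MeasureTheory

/-- `f` is a step function on `[a, b)`: on `[a, b)` it coincides with a finite linear
combination of indicator functions of subintervals `[α, β) ⊆ [a, b)`. -/
def IsStepOn (f : ℝ → ℝ) (a b : ℝ) : Prop :=
  ∃ (m : ℕ) (c α β : Fin m → ℝ),
    (∀ i, a ≤ α i ∧ β i ≤ b) ∧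
    ∀ x ∈ Set.Ico a b,
      f x = ∑ i, c i * (Set.Ico (α i) (β i)).indicator (fun _ => (1 : ℝ)) x

/-- `±1` value attached to a bit. -/
noncomputable def sg (b : Bool) : ℝ := if b then -1 else 1

lemma sg_mul_self (b : Bool) : sg b * sg b = 1 := by cases b <;> simp [sg]

lemma sg_mem (b : Bool) : sg b = 1 ∨ sg b = -1 := by cases b <;> simp [sg]

lemma prod_sg_mem (s : Finset ℕ) (g : ℕ → Bool) :
    (∏ i ∈ s, sg (g i)) = 1 ∨ (∏ i ∈ s, sg (g i)) = -1 := by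
  classical
  induction s using Finset.induction with
  | empty => simp
  | insert _ _ hx ih =>
    rw [Finset.prod_insert hx]
    rcases sg_mem (g _) with h | h <;> rcases ih with h' | h' <;> rw [h, h'] <;> norm_num

lemma sum_prod_sg : ∀ (m : ℕ) (T : Finset ℕ), T.Nonempty → T ⊆ Finset.range m →
    ∑ j ∈ Finset.range (2 ^ m), ∏ i ∈ T, sg (Nat.testBit j i) = 0 := by
  intro m
  induction m with
  | zero =>
    intro T hT hTs
    simp only [Finset.range_zero, Finset.subset_empty] at hTs
    simp [hTs] at hT
  | succ m ih =>
    intro T hT hTs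
    classical
    have hsplit : ∑ j ∈ Finset.range (2 ^ (m + 1)), ∏ i ∈ T, sg (Nat.testBit j i)
        = ∑ j ∈ Finset.range (2 ^ m), (∏ i ∈ T, sg (Nat.testBit j i)
            + ∏ i ∈ T, sg (Nat.testBit (2 ^ m + j) i)) := by
      rw [Finset.sum_add_distrib, pow_succ, mul_two, Finset.sum_range_add]
    rw [hsplit]
    by_cases hmT : m ∈ T
    · have key : ∀ j ∈ Finset.range (2 ^ m),
          ∏ i ∈ T, sg (Nat.testBit j i) + ∏ i ∈ T, sg (Nat.testBit (2 ^ m + j) i) = 0 := by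
        intro j hj
        rw [Finset.mem_range] at hj
        rw [← Finset.mul_prod_erase _ _ hmT, ← Finset.mul_prod_erase _ _ hmT]
        have h1 : Nat.testBit j m = false := Nat.testBit_eq_false_of_lt hj
        have h2 : Nat.testBit (2 ^ m + j) m = true := by
          rw [Nat.testBit_two_pow_add_eq, h1]; rfl
        have h3 : ∀ i ∈ T.erase m, Nat.testBit (2 ^ m + j) i = Nat.testBit j i := by
          intro i hi
          have hi' : i < m := by
            have := hTs (Finset.mem_of_mem_erase hi)
            rw [Finset.mem_range] at this
            exact lt_of_le_of_ne (Nat.lt_succ_iff.1 this) (Finset.ne_of_mem_erase hi)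
          exact Nat.testBit_two_pow_add_gt hi' j
        have h4 : ∏ i ∈ T.erase m, sg ((2 ^ m + j).testBit i)
            = ∏ i ∈ T.erase m, sg (j.testBit i) :=
          Finset.prod_congr rfl (fun i hi => by rw [h3 i hi])
        rw [h4, h1, h2]
        simp [sg]
      rw [Finset.sum_congr rfl key, Finset.sum_const, smul_zero]
    · have hTm : T ⊆ Finset.range m := by
        intro i hi
        have := hTs hi
        rw [Finset.mem_range] at this ⊢
        exact lt_of_le_of_ne (Nat.lt_succ_iff.1 this) (fun h => hmT (h ▸ hi))
      have key : ∀ j ∈ Finset.range (2 ^ m),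
          ∏ i ∈ T, sg (Nat.testBit j i) + ∏ i ∈ T, sg (Nat.testBit (2 ^ m + j) i)
            = 2 * ∏ i ∈ T, sg (Nat.testBit j i) := by
        intro j hj
        have h3 : ∀ i ∈ T, Nat.testBit (2 ^ m + j) i = Nat.testBit j i := by
          intro i hi
          exact Nat.testBit_two_pow_add_gt (Finset.mem_range.1 (hTm hi)) j
        have h4 : ∏ i ∈ T, sg ((2 ^ m + j).testBit i) = ∏ i ∈ T, sg (j.testBit i) :=
          Finset.prod_congr rfl (fun i hi => by rw [h3 i hi])
        rw [h4]; ring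
      rw [Finset.sum_congr rfl key, ← Finset.mul_sum, ih T hT hTm, mul_zero]

theorem stmt_6 (n : ℕ) (hn : 2 ≤ n) (a b : ℝ) (hab : a < b) :
    ∃ f : Fin n → ℝ → ℝ,
      (∀ k, IsStepOn (f k) a b) ∧
      (∀ k, ∀ x ∈ Set.Ico a b, f k x = 1 ∨ f k x = -1) ∧
      (∀ x ∈ Set.Ico a b, ∏ k, f k x = 1) ∧
      ∀ U : Finset (Fin n), U.Nonempty → U ≠ Finset.univ →
        ∫ x in Set.Ico a b, ∏ k ∈ U, f k x = 0 := by
  classical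
  set m : ℕ := n - 1 with hm
  have hnm : n = m + 1 := by omega
  set N : ℕ := 2 ^ m with hN
  have hNpos : (0 : ℝ) < (N : ℝ) := by positivity
  set δ : ℝ := (b - a) / N with hδdef
  have hδ : 0 < δ := div_pos (by linarith) hNpos
  have hNδ : (N : ℝ) * δ = b - a := by
    rw [hδdef]; field_simp
  -- the index of the subinterval containing x
  set idx : ℝ → ℕ := fun x => ⌊(x - a) / δ⌋₊ with hidxdef
  -- floor characterization
  have idx_eq_iff : ∀ x : ℝ, a ≤ x → ∀ j : ℕ,
      (idx x = j ↔ a + (j : ℝ) * δ ≤ x ∧ x < a + ((j : ℝ) + 1) * δ) := by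
    intro x hx j
    have h0 : 0 ≤ (x - a) / δ := div_nonneg (by linarith) hδ.le
    rw [hidxdef]
    simp only
    rw [Nat.floor_eq_iff h0, le_div_iff₀ hδ, div_lt_iff₀ hδ]
    constructor <;> rintro ⟨h1, h2⟩ <;> exact ⟨by linarith, by linarith⟩
  have idx_mem : ∀ x ∈ Set.Ico a b,
      a + (idx x : ℝ) * δ ≤ x ∧ x < a + ((idx x : ℝ) + 1) * δ :=
    fun x hx => (idx_eq_iff x hx.1 (idx x)).1 rfl
  have idx_lt : ∀ x ∈ Set.Ico a b, idx x < N := by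
    intro x hx
    rw [hidxdef]
    simp only
    rw [Nat.floor_lt (div_nonneg (by linarith [hx.1]) hδ.le), div_lt_iff₀ hδ]
    have := hx.2
    linarith [hNδ]
  -- the step functions, via signs attached to bits of the interval index
  set ε : ℕ → ℕ → ℝ := fun k j =>
    if k < m then sg (j.testBit k) else ∏ i ∈ Finset.range m, sg (j.testBit i) with hε
  -- collapsing a sum of indicators at a point
  have collapse : ∀ (g : ℕ → ℝ) (x : ℝ), x ∈ Set.Ico a b →
      ∑ j ∈ Finset.range N, g j * (Set.Ico (a + (j : ℝ) * δ)
        (a + ((j : ℝ) + 1) * δ)).indicator (fun _ => (1 : ℝ)) x = g (idx x) := by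
    intro g x hx
    rw [Finset.sum_eq_single (idx x)]
    · rw [Set.indicator_of_mem (Set.mem_Ico.2 (idx_mem x hx)), mul_one]
    · intro j hj hne
      rw [Set.indicator_of_notMem, mul_zero]
      intro hmem
      exact hne (((idx_eq_iff x hx.1 j).2 (Set.mem_Ico.1 hmem)).symm)
    · intro h
      exact absurd (Finset.mem_range.2 (idx_lt x hx)) h
  refine ⟨fun k x => ε k.val (idx x), ?_, ?_, ?_, ?_⟩
  · -- IsStepOn
    intro k
    refine ⟨N, fun i => ε k.val i.val, fun i => a + ((i : ℕ) : ℝ) * δ,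
      fun i => a + (((i : ℕ) : ℝ) + 1) * δ, ?_, ?_⟩
    · intro i
      have h1 : (0 : ℝ) ≤ ((i : ℕ) : ℝ) * δ := mul_nonneg (Nat.cast_nonneg _) hδ.le
      have h2 : ((i : ℕ) : ℝ) + 1 ≤ (N : ℝ) := by
        exact_mod_cast Nat.succ_le_of_lt i.isLt
      constructor
      · show a ≤ a + ((i : ℕ) : ℝ) * δ
        linarith
      · show a + (((i : ℕ) : ℝ) + 1) * δ ≤ b
        nlinarith [hNδ]
    · intro x hx
      rw [Fin.sum_univ_eq_sum_range (fun j => ε k.val j * (Set.Ico (a + (j : ℝ) * δ)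
        (a + ((j : ℝ) + 1) * δ)).indicator (fun _ => (1 : ℝ)) x) N]
      exact (collapse (fun j => ε k.val j) x hx).symm
  · -- values ±1
    intro k x hx
    simp only [hε]
    split
    · exact sg_mem _
    · exact prod_sg_mem _ _
  · -- full product is 1
    intro x hx
    rw [Fin.prod_univ_eq_prod_range (fun i => ε i (idx x)) n, hnm,
      Finset.prod_range_succ]
    have h1 : ∀ i ∈ Finset.range m, ε i (idx x) = sg ((idx x).testBit i) := by
      intro i hi
      simp only [hε]
      rw [if_pos (Finset.mem_range.1 hi)]
    have h2 : ε m (idx x) = ∏ i ∈ Finset.range m, sg ((idx x).testBit i) := by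
      simp only [hε]
      rw [if_neg (lt_irrefl m)]
    rw [Finset.prod_congr rfl h1, h2, ← Finset.prod_mul_distrib]
    exact Finset.prod_eq_one (fun i _ => sg_mul_self _)
  · -- integrals over proper nonempty subsets vanish
    intro U hU hUne
    set last : Fin n := ⟨m, by omega⟩ with hlast
    have val_lt : ∀ k : Fin n, k ≠ last → (k : ℕ) < m := by
      intro k hk
      have h1 : (k : ℕ) < m + 1 := hnm ▸ k.isLt
      rcases lt_or_eq_of_le (Nat.lt_succ_iff.1 h1) with h | h
      · exact h
      · exact absurd (Fin.ext h) hk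
    obtain ⟨k0, hk0⟩ : ∃ k0 : Fin n, k0 ∉ U := by
      by_contra h
      push_neg at h
      exact hUne (Finset.eq_univ_iff_forall.2 h)
    obtain ⟨T, hTne, hTm, hkey⟩ :
        ∃ T : Finset ℕ, T.Nonempty ∧ T ⊆ Finset.range m ∧
          ∀ j : ℕ, ∏ k ∈ U, ε (k : ℕ) j = ∏ i ∈ T, sg (j.testBit i) := by
      by_cases hl : last ∈ U
      · set A : Finset ℕ := (U.erase last).image Fin.val with hA
        have hAm : A ⊆ Finset.range m := by
          intro i hi
          rw [hA, Finset.mem_image] at hi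
          obtain ⟨k, hk, rfl⟩ := hi
          exact Finset.mem_range.2 (val_lt k (Finset.ne_of_mem_erase hk))
        refine ⟨Finset.range m \ A, ⟨(k0 : ℕ), ?_⟩, Finset.sdiff_subset, ?_⟩
        · have hk0l : k0 ≠ last := fun h => hk0 (h ▸ hl)
          rw [Finset.mem_sdiff]
          refine ⟨Finset.mem_range.2 (val_lt k0 hk0l), ?_⟩
          rw [hA, Finset.mem_image]
          rintro ⟨k', hk', hval⟩
          exact hk0 (Finset.mem_of_mem_erase (Fin.val_injective hval ▸ hk'))
        · intro j
          rw [← Finset.mul_prod_erase _ _ hl]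
          have e1 : ε ((last : Fin n) : ℕ) j = ∏ i ∈ Finset.range m, sg (j.testBit i) := by
            have : ((last : Fin n) : ℕ) = m := rfl
            rw [this]
            simp only [hε]
            rw [if_neg (lt_irrefl m)]
          have e2 : ∏ k ∈ U.erase last, ε (k : ℕ) j = ∏ i ∈ A, sg (j.testBit i) := by
            rw [hA, Finset.prod_image (fun k _ k' _ h => Fin.val_injective h)]
            refine Finset.prod_congr rfl (fun k hk => ?_)
            simp only [hε]
            rw [if_pos (val_lt k (Finset.ne_of_mem_erase hk))]
          have hAsq : (∏ i ∈ A, sg (j.testBit i)) * (∏ i ∈ A, sg (j.testBit i)) = 1 := by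
            rw [← Finset.prod_mul_distrib]
            exact Finset.prod_eq_one (fun i _ => sg_mul_self _)
          rw [e1, e2, ← Finset.prod_sdiff hAm, mul_assoc, hAsq, mul_one]
      · refine ⟨U.image Fin.val, hU.image _, ?_, ?_⟩
        · intro i hi
          rw [Finset.mem_image] at hi
          obtain ⟨k, hk, rfl⟩ := hi
          exact Finset.mem_range.2 (val_lt k (fun h => hl (h ▸ hk)))
        · intro j
          rw [Finset.prod_image (fun k _ k' _ h => Fin.val_injective h)]
          refine Finset.prod_congr rfl (fun k hk => ?_)
          simp only [hε]
          rw [if_pos (val_lt k (fun h => hl (h ▸ hk)))]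
    have hcongr : Set.EqOn (fun x => ∏ k ∈ U, ε (k : ℕ) (idx x))
        (fun x => ∑ j ∈ Finset.range N, (∏ i ∈ T, sg (Nat.testBit j i)) *
          (Set.Ico (a + (j : ℝ) * δ) (a + ((j : ℝ) + 1) * δ)).indicator
            (fun _ => (1 : ℝ)) x) (Set.Ico a b) := by
      intro x hx
      simp only
      rw [collapse (fun j => ∏ i ∈ T, sg (Nat.testBit j i)) x hx]
      exact hkey (idx x)
    rw [setIntegral_congr_fun measurableSet_Ico hcongr, integral_finset_sum]
    · have step : ∀ j ∈ Finset.range N,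
          ∫ x in Set.Ico a b, (∏ i ∈ T, sg (Nat.testBit j i)) *
            (Set.Ico (a + (j : ℝ) * δ) (a + ((j : ℝ) + 1) * δ)).indicator
              (fun _ => (1 : ℝ)) x
          = (∏ i ∈ T, sg (Nat.testBit j i)) * δ := by
        intro j hj
        rw [Finset.mem_range] at hj
        rw [integral_const_mul, setIntegral_indicator measurableSet_Ico]
        have hsub : Set.Ico (a + (j : ℝ) * δ) (a + ((j : ℝ) + 1) * δ) ⊆ Set.Ico a b := by
          apply Set.Ico_subset_Ico
          · have : (0 : ℝ) ≤ (j : ℝ) * δ := mul_nonneg (Nat.cast_nonneg _) hδ.le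
            linarith
          · have hjN : (j : ℝ) + 1 ≤ (N : ℝ) := by exact_mod_cast Nat.succ_le_of_lt hj
            nlinarith [hNδ]
        rw [Set.inter_eq_self_of_subset_right hsub, setIntegral_const]
        have hlen : a + ((j : ℝ) + 1) * δ - (a + (j : ℝ) * δ) = δ := by ring
        rw [measureReal_def, Real.volume_Ico, hlen, ENNReal.toReal_ofReal hδ.le, smul_eq_mul, mul_one]
      rw [Finset.sum_congr rfl step, ← Finset.sum_mul, sum_prod_sg m T hTne hTm, zero_mul]
    · intro j hj
      apply Integrable.const_mul
      exact (MeasureTheory.integrableOn_const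
        (by rw [Real.volume_Ico]; exact ENNReal.ofReal_ne_top) (by simp)).indicator
        measurableSet_Ico
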